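/- arXiv:2209.06534 — 6 statements merged into one kernel-verified Lean document; each statement's English description precedes it below -/
import Mathlib

section
/- There exists a joint distribution over binary variables X_a, X_b, X_c, X_d (valued in {-1,+1}) satisfying the conditional independences X_a ⫫ X_c | X_b and X_d ⫫ X_a | X_c, for which the CHSH quantity E[X_b X_d | X_a=-1,X_c=+1] + E[X_b X_d | X_a=+1,X_c=-1] + E[X_b X_d | X_a=-1,X_c=-1] - E[X_b X_d | X_a=+1,X_c=+1] attains the value 4. -/
open scoped Classical

/-- Probability of an event on a finite space with weights `p`. -/
noncomputable def prOf {Ω : Type} [Fintype Ω] (p : Ω → ℝ) (E : Ω → Prop) : ℝ :=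
  ∑ ω, if E ω then p ω else 0

/-- Conditional expectation `E[Y ∣ Xa = s, Xc = t]`. -/
noncomputable def condExp {Ω : Type} [Fintype Ω] (p : Ω → ℝ) (Xa Xc Y : Ω → ℝ)
    (s t : ℝ) : ℝ :=
  (∑ ω, if Xa ω = s ∧ Xc ω = t then p ω * Y ω else 0) /
    (∑ ω, if Xa ω = s ∧ Xc ω = t then p ω else 0)

/-- `±1`-valued coordinate of a boolean. -/
noncomputable def sgn (b : Bool) : ℝ := if b then 1 else -1

noncomputable def myp : Bool × Bool × Bool × Bool → ℝ :=
  fun ω => if (ω.1 && ω.2.2.1) = (ω.2.1 != ω.2.2.2) then (1/8 : ℝ) else 0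

lemma real_tri (w : ℝ) : w = 1 ∨ w = -1 ∨ (w ≠ 1 ∧ w ≠ -1) := by
  by_cases h : w = 1
  · exact Or.inl h
  · by_cases h' : w = -1
    · exact Or.inr (Or.inl h')
    · exact Or.inr (Or.inr ⟨h, h'⟩)

lemma sgn_ne {x : ℝ} (h1 : x ≠ 1) (h2 : x ≠ -1) : ∀ b, ¬ (sgn b = x) := by
  intro b
  cases b <;> simp [sgn]
  · exact fun h => h2 h.symm
  · exact fun h => h1 h.symm

set_option maxHeartbeats 1000000 in
/-- There is a joint distribution on four ±1-valued variables `Xa, Xb, Xc, Xd`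
satisfying `Xa ⫫ Xc ∣ Xb` and `Xd ⫫ Xa ∣ Xc` (conditional independence stated
in product form), with all four conditioning events `{Xa = s, Xc = t}` having
positive probability, for which the CHSH quantity attains the value 4. -/
theorem chsh_value_four_attainable :
    ∃ p : Bool × Bool × Bool × Bool → ℝ,
      (∀ ω, 0 ≤ p ω) ∧ (∑ ω, p ω = 1) ∧
      -- Xa ⫫ Xc ∣ Xb
      (∀ x y z : ℝ,
        prOf p (fun ω => sgn ω.1 = x ∧ sgn ω.2.2.1 = y ∧ sgn ω.2.1 = z) *
            prOf p (fun ω => sgn ω.2.1 = z) =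
          prOf p (fun ω => sgn ω.1 = x ∧ sgn ω.2.1 = z) *
            prOf p (fun ω => sgn ω.2.2.1 = y ∧ sgn ω.2.1 = z)) ∧
      -- Xd ⫫ Xa ∣ Xc
      (∀ x y z : ℝ,
        prOf p (fun ω => sgn ω.2.2.2 = x ∧ sgn ω.1 = y ∧ sgn ω.2.2.1 = z) *
            prOf p (fun ω => sgn ω.2.2.1 = z) =
          prOf p (fun ω => sgn ω.2.2.2 = x ∧ sgn ω.2.2.1 = z) *
            prOf p (fun ω => sgn ω.1 = y ∧ sgn ω.2.2.1 = z)) ∧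
      (∀ s t : ℝ, (s = -1 ∨ s = 1) → (t = -1 ∨ t = 1) →
        0 < prOf p (fun ω => sgn ω.1 = s ∧ sgn ω.2.2.1 = t)) ∧
      condExp p (fun ω => sgn ω.1) (fun ω => sgn ω.2.2.1)
          (fun ω => sgn ω.2.1 * sgn ω.2.2.2) (-1) 1
        + condExp p (fun ω => sgn ω.1) (fun ω => sgn ω.2.2.1)
            (fun ω => sgn ω.2.1 * sgn ω.2.2.2) 1 (-1)
        + condExp p (fun ω => sgn ω.1) (fun ω => sgn ω.2.2.1)
            (fun ω => sgn ω.2.1 * sgn ω.2.2.2) (-1) (-1)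
        - condExp p (fun ω => sgn ω.1) (fun ω => sgn ω.2.2.1)
            (fun ω => sgn ω.2.1 * sgn ω.2.2.2) 1 1 = 4 := by
  refine ⟨myp, ?_, ?_, ?_, ?_, ?_, ?_⟩
  · intro ω
    unfold myp
    split <;> norm_num
  · norm_num [myp, Fintype.sum_prod_type, Fintype.sum_bool]
  · intro x y z
    rcases real_tri x with hx | hx | hx
    · rcases real_tri y with hy | hy | hy
      · rcases real_tri z with hz | hz | hz
        · subst hx; subst hy; subst hz
          norm_num [prOf, myp, sgn, Fintype.sum_prod_type, Fintype.sum_bool]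
        · subst hx; subst hy; subst hz
          norm_num [prOf, myp, sgn, Fintype.sum_prod_type, Fintype.sum_bool]
        · simp [prOf, sgn_ne hz.1 hz.2]
      · rcases real_tri z with hz | hz | hz
        · subst hx; subst hy; subst hz
          norm_num [prOf, myp, sgn, Fintype.sum_prod_type, Fintype.sum_bool]
        · subst hx; subst hy; subst hz
          norm_num [prOf, myp, sgn, Fintype.sum_prod_type, Fintype.sum_bool]
        · simp [prOf, sgn_ne hz.1 hz.2]
      · simp [prOf, sgn_ne hy.1 hy.2]
    · rcases real_tri y with hy | hy | hy
      · rcases real_tri z with hz | hz | hz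
        · subst hx; subst hy; subst hz
          norm_num [prOf, myp, sgn, Fintype.sum_prod_type, Fintype.sum_bool]
        · subst hx; subst hy; subst hz
          norm_num [prOf, myp, sgn, Fintype.sum_prod_type, Fintype.sum_bool]
        · simp [prOf, sgn_ne hz.1 hz.2]
      · rcases real_tri z with hz | hz | hz
        · subst hx; subst hy; subst hz
          norm_num [prOf, myp, sgn, Fintype.sum_prod_type, Fintype.sum_bool]
        · subst hx; subst hy; subst hz
          norm_num [prOf, myp, sgn, Fintype.sum_prod_type, Fintype.sum_bool]
        · simp [prOf, sgn_ne hz.1 hz.2]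
      · simp [prOf, sgn_ne hy.1 hy.2]
    · simp [prOf, sgn_ne hx.1 hx.2]
  · intro x y z
    rcases real_tri x with hx | hx | hx
    · rcases real_tri y with hy | hy | hy
      · rcases real_tri z with hz | hz | hz
        · subst hx; subst hy; subst hz
          norm_num [prOf, myp, sgn, Fintype.sum_prod_type, Fintype.sum_bool]
        · subst hx; subst hy; subst hz
          norm_num [prOf, myp, sgn, Fintype.sum_prod_type, Fintype.sum_bool]
        · simp [prOf, sgn_ne hz.1 hz.2]
      · rcases real_tri z with hz | hz | hz
        · subst hx; subst hy; subst hz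
          norm_num [prOf, myp, sgn, Fintype.sum_prod_type, Fintype.sum_bool]
        · subst hx; subst hy; subst hz
          norm_num [prOf, myp, sgn, Fintype.sum_prod_type, Fintype.sum_bool]
        · simp [prOf, sgn_ne hz.1 hz.2]
      · simp [prOf, sgn_ne hy.1 hy.2]
    · rcases real_tri y with hy | hy | hy
      · rcases real_tri z with hz | hz | hz
        · subst hx; subst hy; subst hz
          norm_num [prOf, myp, sgn, Fintype.sum_prod_type, Fintype.sum_bool]
        · subst hx; subst hy; subst hz
          norm_num [prOf, myp, sgn, Fintype.sum_prod_type, Fintype.sum_bool]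
        · simp [prOf, sgn_ne hz.1 hz.2]
      · rcases real_tri z with hz | hz | hz
        · subst hx; subst hy; subst hz
          norm_num [prOf, myp, sgn, Fintype.sum_prod_type, Fintype.sum_bool]
        · subst hx; subst hy; subst hz
          norm_num [prOf, myp, sgn, Fintype.sum_prod_type, Fintype.sum_bool]
        · simp [prOf, sgn_ne hz.1 hz.2]
      · simp [prOf, sgn_ne hy.1 hy.2]
    · simp [prOf, sgn_ne hx.1 hx.2]
  · rintro s t (hs | hs) (ht | ht) <;> subst hs <;> subst ht <;>
      norm_num [prOf, myp, sgn, Fintype.sum_prod_type, Fintype.sum_bool]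
  · norm_num [condExp, myp, sgn, Fintype.sum_prod_type, Fintype.sum_bool]
end

section
/- If a distribution p over random variables X_V satisfies the local Markov property for a DAG G with respect to one topological ordering, then it satisfies it with respect to every topological ordering of G. -/
/-- The predecessors of `v` in the linear order `l`. -/
def preSet {V : Type} [Fintype V] (l : LinearOrder V) (v : V) : Finset V :=
  @Finset.filter _ (fun w => l.lt w v) (fun w => l.toDecidableLT w v) Finset.univ

/-- If an abstract conditional-independence relation `CI` (satisfying the
semigraphoid axioms: symmetry, decomposition, weak union, contraction)
satisfies the local Markov property for a DAG (given by its parent sets `pa`)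
with respect to one topological ordering, then it satisfies it with respect to
every topological ordering. -/
theorem local_markov_all_topological_orderings {V : Type} [Fintype V] [DecidableEq V]
    (pa : V → Finset V)
    (CI : Finset V → Finset V → Finset V → Prop)
    (symm : ∀ A B C, CI A B C → CI B A C)
    (decomp : ∀ A B B' C, CI A (B ∪ B') C → CI A B C)
    (weakUnion : ∀ A B B' C, CI A (B ∪ B') C → CI A B (C ∪ B'))
    (contraction : ∀ A B B' C, CI A B (C ∪ B') → CI A B' C → CI A (B ∪ B') C)
    (l₁ l₂ : LinearOrder V)
    (htop₁ : ∀ v w, w ∈ pa v → l₁.lt w v)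
    (htop₂ : ∀ v w, w ∈ pa v → l₂.lt w v)
    (hMarkov : ∀ v : V, CI {v} (preSet l₁ v \ pa v) (pa v)) :
    ∀ v : V, CI {v} (preSet l₂ v \ pa v) (pa v) := by
  classical
  letI : LinearOrder V := l₁
  set E : V → V → Prop := fun a b => a ∈ pa b with hE
  have hmem_pre : ∀ (l : LinearOrder V) (x u : V), x ∈ preSet l u ↔ l.lt x u := by
    intro l x u
    simp [preSet]
  have hdesc_lt₁ : ∀ a b, Relation.TransGen E a b → l₁.lt a b := by
    intro a b h
    induction h with
    | single h => exact htop₁ _ _ h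
    | tail _ h ih => exact lt_trans ih (htop₁ _ _ h)
  have hdesc_lt₂ : ∀ a b, Relation.TransGen E a b → l₂.lt a b := by
    intro a b h
    induction h with
    | single h => exact htop₂ _ _ h
    | tail _ h ih => exact @lt_trans V l₂.toPartialOrder.toPreorder _ _ _ ih (htop₂ _ _ h)
  intro v
  set ND : Finset V :=
    Finset.univ.filter (fun w => ¬ Relation.TransGen E v w ∧ w ≠ v) with hNDdef
  have hmemND : ∀ x, x ∈ ND ↔ ¬ Relation.TransGen E v x ∧ x ≠ v := by
    intro x; rw [hNDdef]; simp
  have hpav_pre : pa v ⊆ preSet l₁ v := fun x hx => (hmem_pre l₁ x v).mpr (htop₁ v x hx)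
  have hpre₁ND : preSet l₁ v ⊆ ND := by
    intro x hx
    rw [hmem_pre] at hx
    rw [hmemND]
    constructor
    · intro hd
      exact absurd (lt_trans (hdesc_lt₁ _ _ hd) hx) (lt_irrefl v)
    · intro h; rw [h] at hx; exact lt_irrefl v hx
  have hNDclosed : ∀ x ∈ ND, pa x ⊆ ND := by
    intro x hx u hu
    rw [hmemND] at hx ⊢
    constructor
    · intro hd
      exact hx.1 (hd.tail hu)
    · intro h; subst h
      exact hx.1 (Relation.TransGen.single hu)
  have key : ∀ n (S : Finset V), S.card = n → S ⊆ ND → preSet l₁ v ⊆ S →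
      (∀ x ∈ S, pa x ⊆ S) → CI {v} (S \ pa v) (pa v) := by
    intro n
    induction n using Nat.strong_induction_on with
    | _ n ih =>
      intro S hcard hSND hpreS hclosed
      by_cases hT : (S \ preSet l₁ v).Nonempty
      case neg =>
        have hS : S = preSet l₁ v := by
          apply Finset.Subset.antisymm _ hpreS
          intro x hx
          by_contra hx'
          exact hT ⟨x, Finset.mem_sdiff.mpr ⟨hx, hx'⟩⟩
        rw [hS]; exact hMarkov v
      case pos =>
        set T := S \ preSet l₁ v with hTdef
        set w := T.max' hT with hw
        have hwT : w ∈ T := T.max'_mem hT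
        have hwS : w ∈ S := (Finset.mem_sdiff.mp hwT).1
        have hwnpre : w ∉ preSet l₁ v := (Finset.mem_sdiff.mp hwT).2
        have hwND := hSND hwS
        rw [hmemND] at hwND
        have hvw : l₁.lt v w := by
          rcases lt_trichotomy v w with h | h | h
          · exact h
          · exact absurd h.symm hwND.2
          · exact absurd ((hmem_pre l₁ w v).mpr h) hwnpre
        set S' := S.erase w with hS'
        have hS'sub : S' ⊆ S := Finset.erase_subset _ _
        have hpreS' : preSet l₁ v ⊆ S' := by
          intro x hx
          exact Finset.mem_erase.mpr ⟨fun h => hwnpre (h ▸ hx), hpreS hx⟩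
        have hS'lt : ∀ x ∈ S', l₁.lt x w := by
          intro x hx
          rcases Finset.mem_erase.mp hx with ⟨hxw, hxS⟩
          by_cases hxpre : x ∈ preSet l₁ v
          · exact lt_trans ((hmem_pre l₁ x v).mp hxpre) hvw
          · have hxT : x ∈ T := Finset.mem_sdiff.mpr ⟨hxS, hxpre⟩
            exact lt_of_le_of_ne (T.le_max' x hxT) hxw
        have hclosed' : ∀ x ∈ S', pa x ⊆ S' := by
          intro x hx u hu
          refine Finset.mem_erase.mpr ⟨?_, hclosed x (hS'sub hx) hu⟩
          intro h; subst h
          exact absurd (lt_trans (hS'lt x hx) (htop₁ x w hu)) (lt_irrefl x)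
        have hCIS' : CI {v} (S' \ pa v) (pa v) := by
          refine ih S'.card ?_ S' rfl (fun x hx => hSND (hS'sub hx)) hpreS' hclosed'
          have hpos : 0 < S.card := Finset.card_pos.mpr ⟨w, hwS⟩
          rw [hS', Finset.card_erase_of_mem hwS]
          omega
        have hpa_w_S' : pa w ⊆ S' := by
          intro u hu
          refine Finset.mem_erase.mpr ⟨?_, hclosed w hwS hu⟩
          intro h; subst h
          exact lt_irrefl w (htop₁ w w hu)
        have hBsub : ({v} ∪ (S' \ pa w)) ⊆ preSet l₁ w \ pa w := by
          intro x hx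
          rcases Finset.mem_union.mp hx with hx | hx
          · rw [Finset.mem_singleton] at hx
            rw [hx]
            refine Finset.mem_sdiff.mpr ⟨(hmem_pre l₁ v w).mpr hvw, ?_⟩
            intro h
            exact hwND.1 (Relation.TransGen.single h)
          · rcases Finset.mem_sdiff.mp hx with ⟨h1, h2⟩
            exact Finset.mem_sdiff.mpr ⟨(hmem_pre l₁ x w).mpr (hS'lt x h1), h2⟩
        have h1 : CI {w} (({v} ∪ (S' \ pa w)) ∪
            ((preSet l₁ w \ pa w) \ ({v} ∪ (S' \ pa w)))) (pa w) := by
          rw [Finset.union_sdiff_of_subset hBsub]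
          exact hMarkov w
        have h2 : CI {w} ({v} ∪ (S' \ pa w)) (pa w) := decomp _ _ _ _ h1
        have h3 : CI {w} {v} (pa w ∪ (S' \ pa w)) := weakUnion _ _ _ _ h2
        have hpawS' : pa w ∪ (S' \ pa w) = S' := by
          rw [Finset.union_sdiff_self_eq_union]
          exact Finset.union_eq_right.mpr hpa_w_S'
        rw [hpawS'] at h3
        have h4 : CI {v} {w} S' := symm _ _ _ h3
        have hpavS' : pa v ∪ (S' \ pa v) = S' := by
          rw [Finset.union_sdiff_self_eq_union]
          exact Finset.union_eq_right.mpr (fun x hx => hpreS' (hpav_pre hx))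
        have h5 : CI {v} {w} (pa v ∪ (S' \ pa v)) := by rw [hpavS']; exact h4
        have h6 : CI {v} ({w} ∪ (S' \ pa v)) (pa v) := contraction _ _ _ _ h5 hCIS'
        have hfin : {w} ∪ (S' \ pa v) = S \ pa v := by
          ext x
          simp only [Finset.mem_union, Finset.mem_singleton, Finset.mem_sdiff, hS',
            Finset.mem_erase]
          constructor
          · rintro (rfl | ⟨⟨hxw, hxS⟩, hxpa⟩)
            · exact ⟨hwS, fun h => hwnpre (hpav_pre h)⟩
            · exact ⟨hxS, hxpa⟩
          · rintro ⟨hxS, hxpa⟩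
            by_cases hxw : x = w
            · exact Or.inl hxw
            · exact Or.inr ⟨⟨hxw, hxS⟩, hxpa⟩
        rw [hfin] at h6
        exact h6
  have hND : CI {v} (ND \ pa v) (pa v) :=
    key ND.card ND rfl (fun x hx => hx) hpre₁ND hNDclosed
  have hsub : preSet l₂ v \ pa v ⊆ ND \ pa v := by
    intro x hx
    rcases Finset.mem_sdiff.mp hx with ⟨h1, h2⟩
    rw [hmem_pre] at h1
    refine Finset.mem_sdiff.mpr ⟨(hmemND x).mpr ⟨?_, ?_⟩, h2⟩
    · intro hd
      exact @lt_asymm V l₂.toPartialOrder.toPreorder _ _ h1 (hdesc_lt₂ _ _ hd)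
    · intro h; rw [h] at h1
      exact @lt_irrefl V l₂.toPartialOrder.toPreorder v h1
  have hfin : CI {v} ((preSet l₂ v \ pa v) ∪
      ((ND \ pa v) \ (preSet l₂ v \ pa v))) (pa v) := by
    rw [Finset.union_sdiff_of_subset hsub]
    exact hND
  exact decomp _ _ _ _ hfin
end

section
/- In an mDAG G, suppose a ⊥_m b | D (a and b are m-separated given D) but a ⊥̸_m b | D ∪ {s}. Then there is a valid topological ordering of the directed part of G in which s comes after a, after b, and after every element of D. -/
structure MDAG (V : Type) where
  dir : V → V → Prop
  face : Finset V → Prop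

namespace MDAG

variable {V : Type}

/-- Two vertices lie in a common bidirected face. -/
def bi (G : MDAG V) (a b : V) : Prop := a ≠ b ∧ ∃ F, G.face F ∧ a ∈ F ∧ b ∈ F

inductive EdgeKind | out | inn | bid

/-- `out` is `a → b`, `inn` is `a ← b`, `bid` is a bidirected edge. -/
def isEdge (G : MDAG V) : EdgeKind → V → V → Prop
  | .out, a, b => G.dir a b
  | .inn, a, b => G.dir b a
  | .bid, a, b => G.bi a b

/-- The edge has an arrowhead at its right endpoint. -/
def EdgeKind.headRight : EdgeKind → Prop
  | .out => True | .inn => False | .bid => True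

/-- The edge has an arrowhead at its left endpoint. -/
def EdgeKind.headLeft : EdgeKind → Prop
  | .out => False | .inn => True | .bid => True

inductive Walk (G : MDAG V) : V → V → Type
  | nil (v : V) : Walk G v v
  | cons {a b c : V} (e : EdgeKind) (h : G.isEdge e a b) (w : Walk G b c) : Walk G a c

def Walk.support {G : MDAG V} : {a b : V} → Walk G a b → List V
  | _, _, .nil v => [v]
  | _, _, @Walk.cons _ _ a _ _ _ _ w => a :: w.support

/-- A path is a walk with no repeated vertices. -/
def Walk.IsPath {G : MDAG V} {a b : V} (w : G.Walk a b) : Prop := w.support.Nodup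

/-- Auxiliary: `ph` records whether the previous edge has an arrowhead at the
current start vertex, which is internal to the overall walk. -/
def Walk.openTail {G : MDAG V} (C : Set V) : {a b : V} → Walk G a b → Prop → Prop
  | _, _, .nil _, _ => True
  | _, _, @Walk.cons _ _ m _ _ e' h' w, ph =>
      ((ph ∧ e'.headLeft) → ∃ d ∈ C, Relation.ReflTransGen G.dir m d) ∧
      (¬ (ph ∧ e'.headLeft) → m ∉ C) ∧
      Walk.openTail C w e'.headRight

/-- The walk is open (active) given conditioning set `C`: every internal
collider has a descendant in `C` and no internal non-collider lies in `C`. -/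
def Walk.openGiven {G : MDAG V} (C : Set V) : {a b : V} → Walk G a b → Prop
  | _, _, .nil _ => True
  | _, _, .cons e _ w => Walk.openTail C w e.headRight

def Walk.colliderTail {G : MDAG V} (v : V) : {a b : V} → Walk G a b → Prop → Prop
  | _, _, .nil _, _ => False
  | _, _, @Walk.cons _ _ m _ _ e' h' w, ph =>
      (v = m ∧ ph ∧ e'.headLeft) ∨ Walk.colliderTail v w e'.headRight

/-- `v` occurs as a collider on the walk. -/
def Walk.isColliderOn {G : MDAG V} (v : V) : {a b : V} → Walk G a b → Prop
  | _, _, .nil _ => False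
  | _, _, .cons e _ w => Walk.colliderTail v w e.headRight

/-- m-separation: every path from `A` to `B` is blocked by `C`. -/
def mSep (G : MDAG V) (A B C : Set V) : Prop :=
  ∀ a ∈ A, ∀ b ∈ B, ∀ w : G.Walk a b, w.IsPath → ¬ w.openGiven C

end MDAG

/-! ### Auxiliary development -/

namespace MDAG

open Relation

variable {V : Type} {G : MDAG V}

lemma bi_symm {a b : V} (h : G.bi a b) : G.bi b a :=
  ⟨h.1.symm, h.2.imp fun F hF => ⟨hF.1, hF.2.2, hF.2.1⟩⟩

def EdgeKind.flip : EdgeKind → EdgeKind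
  | .out => .inn | .inn => .out | .bid => .bid

lemma isEdge_flip {e : EdgeKind} {a b : V} (h : G.isEdge e a b) :
    G.isEdge e.flip b a := by
  cases e with
  | out => exact h
  | inn => exact h
  | bid => exact bi_symm h

@[simp] lemma flip_headLeft (e : EdgeKind) : e.flip.headLeft = e.headRight := by
  cases e <;> rfl

@[simp] lemma flip_headRight (e : EdgeKind) : e.flip.headRight = e.headLeft := by
  cases e <;> rfl

@[simp] lemma support_nil (v : V) : (Walk.nil v : G.Walk v v).support = [v] := rfl

@[simp] lemma support_cons {a m b : V} (e : EdgeKind) (h : G.isEdge e a m)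
    (w : G.Walk m b) : (Walk.cons e h w).support = a :: w.support := rfl

@[simp] lemma openTail_nil (C : Set V) (v : V) (ph : Prop) :
    Walk.openTail C (Walk.nil v : G.Walk v v) ph = True := rfl

lemma openTail_cons (C : Set V) {a m b : V} (e : EdgeKind) (h : G.isEdge e a m)
    (w : G.Walk m b) (ph : Prop) :
    Walk.openTail C (Walk.cons e h w) ph =
      (((ph ∧ e.headLeft) → ∃ d ∈ C, ReflTransGen G.dir a d) ∧
      (¬ (ph ∧ e.headLeft) → a ∉ C) ∧
      Walk.openTail C w e.headRight) := rfl

@[simp] lemma openGiven_nil (C : Set V) (v : V) :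
    Walk.openGiven C (Walk.nil v : G.Walk v v) = True := rfl

@[simp] lemma openGiven_cons (C : Set V) {a m b : V} (e : EdgeKind) (h : G.isEdge e a m)
    (w : G.Walk m b) :
    Walk.openGiven C (Walk.cons e h w) = Walk.openTail C w e.headRight := rfl

lemma start_mem_support {a b : V} (w : G.Walk a b) : a ∈ w.support := by
  cases w <;> simp

/-- append a single edge at the end of a walk -/
def Walk.snoc : {a b : V} → G.Walk a b → {c : V} → (e : EdgeKind) →
    G.isEdge e b c → G.Walk a c
  | _, _, .nil v, c, e, h => .cons e h (.nil c)
  | _, _, .cons e' h' w, c, e, h => .cons e' h' (w.snoc e h)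

@[simp] lemma support_snoc : ∀ {a b : V} (w : G.Walk a b) {c : V} (e : EdgeKind)
    (h : G.isEdge e b c), (w.snoc e h).support = w.support ++ [c]
  | _, _, .nil v, c, e, h => rfl
  | _, _, .cons e' h' w, c, e, h => by
      simp [Walk.snoc, support_snoc w e h]

def Walk.reverse : {a b : V} → G.Walk a b → G.Walk b a
  | _, _, .nil v => .nil v
  | _, _, .cons e h w => w.reverse.snoc e.flip (isEdge_flip h)

@[simp] lemma support_reverse : ∀ {a b : V} (w : G.Walk a b),
    w.reverse.support = w.support.reverse
  | _, _, .nil v => rfl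
  | _, _, .cons e h w => by
      simp [Walk.reverse, support_reverse w]

/-- whether the last edge of the walk has a head at the end vertex
(`ph` if the walk has no edges) -/
def Walk.lastHead : {a b : V} → G.Walk a b → Prop → Prop
  | _, _, .nil _, ph => ph
  | _, _, .cons e _ w, _ => w.lastHead e.headRight

@[simp] lemma lastHead_snoc : ∀ {a b : V} (w : G.Walk a b) {c : V} (e : EdgeKind)
    (h : G.isEdge e b c) (ph : Prop), (w.snoc e h).lastHead ph = e.headRight
  | _, _, .nil v, c, e, h, ph => rfl
  | _, _, .cons e' h' w, c, e, h, ph => by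
      simp [Walk.snoc, Walk.lastHead, lastHead_snoc w e h]

lemma openTail_snoc (C : Set V) : ∀ {a b : V} (w : G.Walk a b) {c : V} (e : EdgeKind)
    (h : G.isEdge e b c) (ph : Prop),
    Walk.openTail C (w.snoc e h) ph ↔
      Walk.openTail C w ph ∧
      ((w.lastHead ph ∧ e.headLeft) → ∃ d ∈ C, ReflTransGen G.dir b d) ∧
      (¬ (w.lastHead ph ∧ e.headLeft) → b ∉ C)
  | _, _, .nil v, c, e, h, ph => by
      simp [Walk.snoc, openTail_cons, Walk.lastHead]
  | _, _, .cons e' h' w, c, e, h, ph => by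
      simp only [Walk.snoc, openTail_cons, Walk.lastHead,
        openTail_snoc C w e h e'.headRight]
      tauto

/-- the condition imposed at the end vertex of `w` when an edge of kind `e`
is appended after it -/
def Walk.endCond (C : Set V) : {a b : V} → G.Walk a b → EdgeKind → Prop
  | _, _, .nil _, _ => True
  | _, b, @Walk.cons _ _ _ _ _ e' _ w', e =>
      ((w'.lastHead e'.headRight ∧ e.headLeft) → ∃ d ∈ C, ReflTransGen G.dir b d) ∧
      (¬ (w'.lastHead e'.headRight ∧ e.headLeft) → b ∉ C)

lemma openGiven_snoc (C : Set V) : ∀ {a b : V} (w : G.Walk a b) {c : V} (e : EdgeKind)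
    (h : G.isEdge e b c),
    Walk.openGiven C (w.snoc e h) ↔ Walk.openGiven C w ∧ Walk.endCond C w e
  | _, _, .nil v, c, e, h => by
      simp [Walk.snoc, Walk.openGiven, Walk.endCond]
  | _, _, .cons e' h' w, c, e, h => by
      simp only [Walk.snoc, openGiven_cons, Walk.endCond,
        openTail_snoc C w e h e'.headRight]

lemma endCond_snoc (C : Set V) : ∀ {a b : V} (w : G.Walk a b) {c : V} (e1 : EdgeKind)
    (h1 : G.isEdge e1 b c) (e : EdgeKind),
    Walk.endCond C (w.snoc e1 h1) e ↔
      ((e1.headRight ∧ e.headLeft) → ∃ d ∈ C, ReflTransGen G.dir c d) ∧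
      (¬ (e1.headRight ∧ e.headLeft) → c ∉ C)
  | _, _, .nil v, c, e1, h1, e => by
      simp [Walk.snoc, Walk.endCond, Walk.lastHead]
  | _, _, .cons e' h' w, c, e1, h1, e => by
      simp [Walk.snoc, Walk.endCond, Walk.lastHead, lastHead_snoc w e1 h1]

lemma openGiven_reverse (C : Set V) : ∀ {a b : V} (w : G.Walk a b),
    Walk.openGiven C w.reverse ↔ Walk.openGiven C w
  | _, _, .nil v => by simp [Walk.reverse]
  | _, _, .cons e h w => by
      rw [Walk.reverse, openGiven_snoc, openGiven_reverse C w]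
      cases w with
      | nil v => simp [Walk.reverse, Walk.endCond, Walk.openGiven]
      | cons e₂ h₂ w₂ =>
          rw [Walk.reverse, endCond_snoc]
          simp only [flip_headLeft, flip_headRight, openGiven_cons, openTail_cons]
          constructor
          · rintro ⟨h3, h1, h2⟩
            exact ⟨fun hh => h1 ⟨hh.2, hh.1⟩, fun hh => h2 fun hc => hh ⟨hc.2, hc.1⟩, h3⟩
          · rintro ⟨h1, h2, h3⟩
            exact ⟨h3, fun hh => h1 ⟨hh.2, hh.1⟩, fun hh => h2 fun hc => hh ⟨hc.2, hc.1⟩⟩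

lemma openGiven_of_openTail_false {C : Set V} {a b : V} (w : G.Walk a b)
    (h : Walk.openTail C w False) : Walk.openGiven C w := by
  cases w with
  | nil v => trivial
  | cons e he w => exact h.2.2

/-- If a walk's tail conditions hold and `x` is a vertex on it not in `C`,
the suffix of the walk starting at `x` satisfies the tail conditions with
incoming `False`. -/
lemma suffix_open {C : Set V} : ∀ {c y : V} (w : G.Walk c y) (ph : Prop),
    Walk.openTail C w ph → ∀ x, x ∈ w.support → x ∉ C →
    ∃ w₂ : G.Walk x y, w₂.support <:+ w.support ∧ Walk.openTail C w₂ False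
  | _, _, .nil v, ph, hop, x, hx, hxC => by
      simp at hx; subst hx
      exact ⟨.nil x, List.suffix_refl _, trivial⟩
  | _, _, .cons e' h' w, ph, hop, x, hx, hxC => by
      rw [support_cons, List.mem_cons] at hx
      rcases hx with rfl | hx
      · refine ⟨.cons e' h' w, List.suffix_refl _, ?_⟩
        exact ⟨fun hh => hh.1.elim, fun _ => hxC, hop.2.2⟩
      · obtain ⟨w₂, hsuf, hop₂⟩ := suffix_open w e'.headRight hop.2.2 x hx hxC
        exact ⟨w₂, hsuf.trans (List.suffix_cons _ _), hop₂⟩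

/-- Extraction: if a walk tail is open given `D ∪ {s}` but not given `D`, there
is a suffix starting at a vertex `m` that is a collider whose only
conditioning-descendant is `s`, and the suffix is well-behaved given `D`. -/
lemma extract {D : Set V} {s : V} : ∀ {c y : V} (w : G.Walk c y) (ph : Prop),
    Walk.openTail (D ∪ {s}) w ph → ¬ Walk.openTail D w ph →
    ∃ (m : V) (w' : G.Walk m y), w'.support <:+ w.support ∧
      ReflTransGen G.dir m s ∧ (∀ d ∈ D, ¬ ReflTransGen G.dir m d) ∧
      Walk.openTail D w' False
  | _, _, .nil v, ph, hop, hnop => absurd trivial hnop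
  | _, _, @Walk.cons _ _ m₀ _ _ e' h' w, ph, hop, hnop => by
      obtain ⟨c1s, c2s, hrest_s⟩ := hop
      by_cases hR : Walk.openTail D w e'.headRight
      · have c2 : ¬ (ph ∧ e'.headLeft) → m₀ ∉ D := fun hn hm => c2s hn (Or.inl hm)
        have hc1 : ¬ ((ph ∧ e'.headLeft) → ∃ d ∈ D, ReflTransGen G.dir m₀ d) := by
          intro c1; exact hnop ⟨c1, c2, hR⟩
        rw [Classical.not_imp] at hc1
        obtain ⟨hphl, hne⟩ := hc1
        have hmD : ∀ d ∈ D, ¬ ReflTransGen G.dir m₀ d := fun d hd hr => hne ⟨d, hd, hr⟩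
        have hms : ReflTransGen G.dir m₀ s := by
          obtain ⟨d, hd, hr⟩ := c1s hphl
          rcases hd with hd | hd
          · exact absurd hr (hmD d hd)
          · rw [Set.mem_singleton_iff] at hd; subst hd; exact hr
        refine ⟨m₀, .cons e' h' w, List.suffix_refl _, hms, hmD, ?_⟩
        exact ⟨fun hh => hh.1.elim, fun _ => fun hm => hmD m₀ hm ReflTransGen.refl, hR⟩
      · obtain ⟨m, w', hsuf, hms, hmD, hop'⟩ := extract w e'.headRight hrest_s hR
        exact ⟨m, w', hsuf.trans (List.suffix_cons _ _), hms, hmD, hop'⟩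

/-- Monotonicity: if `s` has a descendant in `D`, openness given `D ∪ {s}`
implies openness given `D`. -/
lemma openTail_mono {D : Set V} {s d₀ : V} (hd₀ : d₀ ∈ D)
    (hsd : ReflTransGen G.dir s d₀) : ∀ {c y : V} (w : G.Walk c y) (ph : Prop),
    Walk.openTail (D ∪ {s}) w ph → Walk.openTail D w ph
  | _, _, .nil v, ph, hop => trivial
  | _, _, .cons e' h' w, ph, hop => by
      refine ⟨?_, fun hn hm => hop.2.1 hn (Or.inl hm),
        openTail_mono hd₀ hsd w e'.headRight hop.2.2⟩
      intro hh
      obtain ⟨d, hd, hr⟩ := hop.1 hh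
      rcases hd with hd | hd
      · exact ⟨d, hd, hr⟩
      · rw [Set.mem_singleton_iff] at hd; subst hd
        exact ⟨d₀, hd₀, hr.trans hsd⟩

lemma openGiven_mono {D : Set V} {s d₀ : V} (hd₀ : d₀ ∈ D)
    (hsd : ReflTransGen G.dir s d₀) {c y : V} (w : G.Walk c y)
    (hop : Walk.openGiven (D ∪ {s}) w) : Walk.openGiven D w := by
  cases w with
  | nil v => trivial
  | cons e h w => exact openTail_mono hd₀ hsd w e.headRight hop

/-- Splicing: from a vertex `x` reachable from `m` by directed edges, build a
path to `y` using a reversed directed path down to the suffix walk `w'`. -/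
lemma splice {D : Set V} {m y : V}
    (hacyclic : ∀ v : V, ¬ TransGen G.dir v v)
    (w' : G.Walk m y) (hnd : w'.support.Nodup)
    (hD : ∀ u, ReflTransGen G.dir m u → u ∉ D)
    (hop : Walk.openTail D w' False) :
    ∀ x, ReflTransGen G.dir m x →
    ∃ W : G.Walk x y, W.support.Nodup ∧
      (∀ v ∈ W.support, v ∈ w'.support ∨ ReflTransGen G.dir v x) ∧
      Walk.openTail D W False := by
  have hsuffix : ∀ x, x ∈ w'.support → ReflTransGen G.dir m x →
      ∃ W : G.Walk x y, W.support.Nodup ∧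
        (∀ v ∈ W.support, v ∈ w'.support ∨ ReflTransGen G.dir v x) ∧
        Walk.openTail D W False := by
    intro x hx hmx
    obtain ⟨w₂, hsuf, hop₂⟩ := suffix_open w' False hop x hx (hD x hmx)
    exact ⟨w₂, hnd.sublist hsuf.sublist,
      fun v hv => Or.inl (hsuf.subset hv), hop₂⟩
  intro x hx
  induction hx with
  | refl => exact hsuffix m (start_mem_support w') ReflTransGen.refl
  | @tail p x hmp hpx ih =>
      by_cases hxs : x ∈ w'.support
      · exact hsuffix x hxs (hmp.tail hpx)
      · obtain ⟨Wp, hndp, hinv, hopp⟩ := ih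
        have hxnot : x ∉ Wp.support := by
          intro hmem
          rcases hinv x hmem with h | h
          · exact hxs h
          · exact hacyclic x (TransGen.tail' h hpx)
        have hedge : G.isEdge .inn x p := hpx
        refine ⟨.cons .inn hedge Wp, ?_, ?_, ?_⟩
        · rw [support_cons]; exact List.nodup_cons.mpr ⟨hxnot, hndp⟩
        · intro v hv
          rw [support_cons, List.mem_cons] at hv
          rcases hv with rfl | hv
          · exact Or.inr ReflTransGen.refl
          · rcases hinv v hv with h | h
            · exact Or.inl h
            · exact Or.inr (h.tail hpx)
        · exact ⟨fun hh => hh.1.elim, fun _ => hD x (hmp.tail hpx), hopp⟩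

/-- Key surgery lemma: from an `x`–`y` path open given `D ∪ {s}` but blocked
given `D`, if `s` has a directed path to `x` then there is an `x`–`y` path
open given `D`, contradicting separation. -/
lemma key {D : Set V} {s x y : V}
    (hacyclic : ∀ v : V, ¬ TransGen G.dir v v)
    (hxy : x ≠ y) (w : G.Walk x y) (hpath : w.IsPath)
    (hopen : Walk.openGiven (D ∪ {s}) w) (hnopen : ¬ Walk.openGiven D w)
    (hsx : TransGen G.dir s x)
    (hsep' : ∀ W : G.Walk x y, W.IsPath → ¬ Walk.openGiven D W) : False := by
  cases w with
  | nil v => exact hxy rfl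
  | cons e h w =>
      rw [openGiven_cons] at hopen hnopen
      obtain ⟨m, w', hsuf, hms, hmD, hop'⟩ := extract w e.headRight hopen hnopen
      have hndw : w.support.Nodup := by
        rw [Walk.IsPath, support_cons, List.nodup_cons] at hpath
        exact hpath.2
      have hnd' : w'.support.Nodup := hndw.sublist hsuf.sublist
      have hDu : ∀ u, ReflTransGen G.dir m u → u ∉ D :=
        fun u hu hmem => hmD u hmem hu
      have hmx : ReflTransGen G.dir m x := hms.trans hsx.to_reflTransGen
      obtain ⟨W, hndW, _, hopW⟩ := splice hacyclic w' hnd' hDu hop' x hmx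
      exact hsep' W hndW (openGiven_of_openTail_false W hopW)

/-- Topological numbering of a finite acyclic relation. -/
lemma exists_topo {α : Type} [Fintype α] (ρ : α → α → Prop)
    (hρ : ∀ v, ¬ TransGen ρ v v) :
    ∃ f : α → ℕ, Function.Injective f ∧ ∀ v w, ρ v w → f v < f w := by
  classical
  let r' : α → α → Prop := fun u v => u = v ∨ TransGen ρ u v
  haveI : IsPartialOrder α r' := {
    refl := fun u => Or.inl rfl
    trans := by
      rintro u v z (rfl | h1) (rfl | h2)
      · exact Or.inl rfl
      · exact Or.inr h2
      · exact Or.inr h1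
      · exact Or.inr (h1.trans h2)
    antisymm := by
      rintro u v h1 h2
      rcases h1 with rfl | h1
      · rfl
      rcases h2 with rfl | h2
      · rfl
      exact absurd (h1.trans h2) (hρ u) }
  obtain ⟨L, hL, hrL⟩ := extend_partialOrder r'
  haveI := hL
  let f : α → ℕ := fun v => (Finset.univ.filter fun u => L u v ∧ u ≠ v).card
  have hsub : ∀ {v w : α}, L v w → v ≠ w →
      (Finset.univ.filter fun u => L u v ∧ u ≠ v) ⊆
        (Finset.univ.filter fun u => L u w ∧ u ≠ w) := by
    intro v w hvw hne u hu
    rw [Finset.mem_filter] at hu ⊢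
    refine ⟨Finset.mem_univ u, Trans.trans hu.2.1 hvw, ?_⟩
    rintro rfl
    exact hne (Std.Antisymm.antisymm _ _ hvw hu.2.1)
  have hmono : ∀ {v w : α}, L v w → v ≠ w → f v < f w := by
    intro v w hvw hne
    apply Finset.card_lt_card
    rw [Finset.ssubset_iff_of_subset (hsub hvw hne)]
    exact ⟨v, by simp [hvw, hne], by simp⟩
  refine ⟨f, ?_, ?_⟩
  · intro u v huv
    by_contra hne
    rcases Std.Total.total (r := L) u v with h | h
    · exact absurd huv (Nat.ne_of_lt (hmono h hne))
    · exact absurd huv.symm (Nat.ne_of_lt (hmono h (Ne.symm hne)))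
  · intro v w h
    have hne : v ≠ w := by rintro rfl; exact hρ v (TransGen.single h)
    exact hmono (hrL v w (Or.inr (TransGen.single h))) hne

end MDAG

open MDAG Relation in
/-- Lemma: in an mDAG (a DAG with a collection of bidirected faces), if
`a ⊥ₘ b ∣ D` but not `a ⊥ₘ b ∣ D ∪ {s}`, then there is a valid topological
ordering of the directed part in which `s` comes after `a`, `b`, and every
element of `D`. -/
theorem topological_order_with_s_last {V : Type} [Fintype V] (G : MDAG V)
    (hacyclic : ∀ v : V, ¬ Relation.TransGen G.dir v v)
    (a b s : V) (D : Set V)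
    (haD : a ∉ D) (hbD : b ∉ D) (hsD : s ∉ D)
    (hsa : s ≠ a) (hsb : s ≠ b) (hab : a ≠ b)
    (hsep : G.mSep {a} {b} D)
    (hnsep : ¬ G.mSep {a} {b} (D ∪ {s})) :
    ∃ f : V → ℕ, Function.Injective f ∧ (∀ v w, G.dir v w → f v < f w) ∧
      f a < f s ∧ f b < f s ∧ ∀ d ∈ D, f d < f s := by
  classical
  -- extract an open path from the failure of separation
  rw [mSep] at hnsep
  push_neg at hnsep
  obtain ⟨a', ha', b', hb', w, hpath, hopen⟩ := hnsep
  rw [Set.mem_singleton_iff] at ha' hb'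
  have ha'' := ha'.symm; have hb'' := hb'.symm
  subst ha''; subst hb''
  have hnopenD : ¬ Walk.openGiven D w := fun h => hsep a rfl b rfl w hpath h
  -- claim 1 : s has no directed path to any element of D
  have claim1 : ∀ d ∈ D, ¬ TransGen G.dir s d := by
    intro d hd hsd
    exact hnopenD (openGiven_mono hd hsd.to_reflTransGen w hopen)
  -- claim 2 : s has no directed path to a
  have claim2 : ¬ TransGen G.dir s a := by
    intro hsa'
    exact key hacyclic hab w hpath hopen hnopenD hsa'
      (fun W hW hOW => hsep a rfl b rfl W hW hOW)
  -- claim 3 : s has no directed path to b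
  have claim3 : ¬ TransGen G.dir s b := by
    intro hsb'
    have hpath_r : (Walk.reverse w).IsPath := by
      rw [Walk.IsPath, support_reverse, List.nodup_reverse]; exact hpath
    have hopen_r : Walk.openGiven (D ∪ {s}) w.reverse :=
      (openGiven_reverse _ w).mpr hopen
    have hnopen_r : ¬ Walk.openGiven D w.reverse := by
      intro hh
      have hp2 : (Walk.reverse (Walk.reverse w)).IsPath := by
        rw [Walk.IsPath, support_reverse, List.nodup_reverse]; exact hpath_r
      exact hsep a rfl b rfl w.reverse.reverse hp2
        ((openGiven_reverse _ w.reverse).mpr hh)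
    exact key hacyclic hab.symm w.reverse hpath_r hopen_r hnopen_r hsb'
      (fun W hW hOW => by
        have hWr : (Walk.reverse W).IsPath := by
          rw [Walk.IsPath, support_reverse, List.nodup_reverse]; exact hW
        exact hsep a rfl b rfl W.reverse hWr ((openGiven_reverse _ W).mpr hOW))
  have hns : ∀ v, (v = a ∨ v = b ∨ v ∈ D) → ¬ TransGen G.dir s v := by
    rintro v (rfl | rfl | hv)
    · exact claim2
    · exact claim3
    · exact claim1 v hv
  -- the augmented relation
  set R : V → V → Prop := fun x y => G.dir x y ∨ (y = s ∧ (x = a ∨ x = b ∨ x ∈ D))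
    with hR
  have hC : ∀ x y, ReflTransGen R x y →
      ReflTransGen G.dir x y ∨ ReflTransGen G.dir s y := by
    intro x y h
    induction h with
    | refl => exact Or.inl ReflTransGen.refl
    | @tail p q hxp hpq ih =>
        rcases hpq with hd | ⟨rfl, _⟩
        · exact ih.imp (fun h => h.tail hd) (fun h => h.tail hd)
        · exact Or.inr ReflTransGen.refl
  have hA3 : ∀ x y, ReflTransGen R x y → TransGen G.dir s x →
      ReflTransGen G.dir x y := by
    intro x y h
    induction h with
    | refl => exact fun _ => ReflTransGen.refl
    | @tail p q hxp hpq ih =>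
        intro hsx
        have hxp' := ih hsx
        rcases hpq with hd | ⟨rfl, hm⟩
        · exact hxp'.tail hd
        · exact absurd (hsx.trans_left hxp') (hns p hm)
  have hRs : ¬ TransGen R s s := by
    intro h
    rw [TransGen.head'_iff] at h
    obtain ⟨c, hsc, hcs⟩ := h
    rcases hsc with hd | ⟨_, hm⟩
    · have := hA3 c s hcs (TransGen.single hd)
      exact hacyclic s ((TransGen.single hd).trans_left this)
    · rcases hm with rfl | rfl | hm
      · exact hsa rfl
      · exact hsb rfl
      · exact hsD hm
  have hRacyc : ∀ v, ¬ TransGen R v v := by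
    intro v hv
    rw [TransGen.head'_iff] at hv
    obtain ⟨c, hvc, hcv⟩ := hv
    rcases hvc with hd | ⟨rfl, _⟩
    · rcases hC c v hcv with h | h
      · exact hacyclic v (TransGen.head' hd h)
      · have hsc : TransGen G.dir s c := TransGen.tail' h hd
        exact hacyclic v (TransGen.head' hd (hA3 c v hcv hsc))
    · exact hRs (TransGen.tail' hcv (Or.inr ⟨rfl, by tauto⟩))
  obtain ⟨f, hinj, hmono⟩ := exists_topo R hRacyc
  refine ⟨f, hinj, fun v w h => hmono v w (Or.inl h), ?_, ?_, ?_⟩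
  · exact hmono a s (Or.inr ⟨rfl, Or.inl rfl⟩)
  · exact hmono b s (Or.inr ⟨rfl, Or.inr (Or.inl rfl)⟩)
  · exact fun d hd => hmono d s (Or.inr ⟨rfl, Or.inr (Or.inr hd)⟩)
end

section
/- In a DAG, if a and b are d-separated given D but become d-connected given D ∪ {s}, then there exists a path from a to b containing a collider c such that s is a descendant of c and no element of D is a descendant of c... in particular s has a descendant-free relationship to D on that path; consequently, s is not an ancestor of any element of D along the opened path's colliders. -/
open MDAG Relation in
/-- The DAG `H` viewed as an mDAG with no bidirected faces. -/
def toMDAG {V : Type} (H : V → V → Prop) : MDAG V := ⟨H, fun _ => False⟩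

/-- d-separation in a DAG `H`. -/
def dSep {V : Type} (H : V → V → Prop) (A B C : Set V) : Prop :=
  (toMDAG H).mSep A B C

lemma key_tail {V : Type} (H : V → V → Prop) (s : V) (D : Set V) :
    ∀ {a b : V} (w : (toMDAG H).Walk a b) (ph : Prop),
    w.openTail (D ∪ {s}) ph → ¬ w.openTail D ph →
    ∃ c, MDAG.Walk.colliderTail c w ph ∧ Relation.ReflTransGen H c s ∧
      ∀ d ∈ D, ¬ Relation.ReflTransGen H c d := by
  intro a b w
  induction w with
  | nil v => intro ph _ h2; exact absurd trivial h2
  | @cons x y z e h w ih =>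
    intro ph h1 h2
    obtain ⟨hA, hB, hC⟩ := h1
    by_cases hph : ph ∧ e.headLeft
    · obtain ⟨d, hd, hmd⟩ := hA hph
      by_cases hdesc : ∃ d ∈ D, Relation.ReflTransGen H x d
      · have htail : ¬ MDAG.Walk.openTail D w e.headRight := by
          intro ht
          exact h2 ⟨fun _ => hdesc, fun hn => absurd hph hn, ht⟩
        obtain ⟨c, hc1, hc2, hc3⟩ := ih e.headRight hC htail
        exact ⟨c, Or.inr hc1, hc2, hc3⟩
      · push_neg at hdesc
        have hds : d = s := by
          rcases hd with hd | hd
          · exact absurd hmd (hdesc d hd)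
          · exact hd
        exact ⟨x, Or.inl ⟨rfl, hph⟩, hds ▸ hmd, hdesc⟩
    · have hm : x ∉ D := fun hmD => (hB hph) (Or.inl hmD)
      have htail : ¬ MDAG.Walk.openTail D w e.headRight := by
        intro ht
        exact h2 ⟨fun h => absurd h hph, fun _ => hm, ht⟩
      obtain ⟨c, hc1, hc2, hc3⟩ := ih e.headRight hC htail
      exact ⟨c, Or.inr hc1, hc2, hc3⟩

/-- In a DAG, if `a ⊥_d b ∣ D` but `a` and `b` are d-connected given
`D ∪ {s}`, then some path from `a` to `b` that is open given `D ∪ {s}` has a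
collider `c` with `s` among its descendants but no element of `D` among its
descendants. -/
theorem opened_path_has_collider_to_s {V : Type} [Fintype V] (H : V → V → Prop)
    (hacyclic : ∀ x : V, ¬ Relation.TransGen H x x)
    (a b s : V) (D : Set V)
    (hsep : dSep H {a} {b} D)
    (hnsep : ¬ dSep H {a} {b} (D ∪ {s})) :
    ∃ w : (toMDAG H).Walk a b, w.IsPath ∧ w.openGiven (D ∪ {s}) ∧
      ∃ c : V, w.isColliderOn c ∧ Relation.ReflTransGen H c s ∧
        ∀ d ∈ D, ¬ Relation.ReflTransGen H c d := by
  rw [dSep, MDAG.mSep] at hnsep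
  push_neg at hnsep
  simp only [Set.mem_singleton_iff] at hnsep
  obtain ⟨a', rfl, b', rfl, w, hpath, hopen⟩ := hnsep
  refine ⟨w, hpath, hopen, ?_⟩
  have hblk : ¬ w.openGiven D := hsep a' rfl b' rfl w hpath
  cases w with
  | nil v => exact absurd trivial hblk
  | cons e h w' =>
    exact key_tail H s D w' e.headRight hopen hblk
end

section
/- In an mDAG whose directed part is acyclic, every district contains at least one fixable vertex, where a vertex v is fixable if dec(v) ∩ dis(v) = {v}. -/
open MDAG Relation in
/-- In an mDAG with acyclic directed part, every district contains a fixable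
vertex: some `w` in the district of `v` whose only strict descendants lie
outside its district, i.e. `dec(w) ∩ dis(w) = {w}`. -/
theorem district_has_fixable_vertex {V : Type} [Fintype V] (G : MDAG V)
    (hacyclic : ∀ x : V, ¬ Relation.TransGen G.dir x x) (v : V) :
    ∃ w : V, Relation.ReflTransGen G.bi v w ∧
      ∀ u : V, Relation.ReflTransGen G.dir w u →
        Relation.ReflTransGen G.bi w u → u = w := by
  classical
  haveI : IsTrans V (fun a b : V => Relation.TransGen G.dir b a) :=
    ⟨fun a b c hab hbc => hbc.trans hab⟩
  haveI : IsIrrefl V (fun a b : V => Relation.TransGen G.dir b a) :=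
    ⟨fun a h => hacyclic a h⟩
  have hwf : WellFounded (fun a b : V => Relation.TransGen G.dir b a) :=
    Finite.wellFounded_of_trans_of_irrefl _
  obtain ⟨w, hwS, hmin⟩ := hwf.has_min {w | Relation.ReflTransGen G.bi v w} ⟨v, .refl⟩
  refine ⟨w, hwS, fun u hdir hbi => ?_⟩
  rcases (Relation.reflTransGen_iff_eq_or_transGen).mp hdir with h | h
  · exact h
  · exact absurd h (hmin u (hwS.trans hbi))
end

section
/- Latent projection preserves directed reachability among retained vertices: if G is an mDAG (or DAG) with vertex set V ∪ L (disjoint), and G' is its latent projection onto V, then for a, b ∈ V, there is a directed path from a to b in G' if and only if there is a directed path from a to b in G. -/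
private lemma chain_to_rtg {α : Type} {r : α → α → Prop} :
    ∀ (l : List α) (x y : α), List.Chain r x (l ++ [y]) → Relation.ReflTransGen r x y := by
  intro l
  induction l with
  | nil => intro x y h; simp at h; exact Relation.ReflTransGen.single (List.isChain_pair.1 h)
  | cons a t ih =>
      intro x y h
      simp only [List.cons_append, List.isChain_cons_cons] at h
      exact Relation.ReflTransGen.head (List.isChain_cons_cons.1 h).1 (ih a y (List.isChain_cons_cons.1 h).2)

private lemma rtg_to_chain {α : Type} {r : α → α → Prop} {x y : α}
    (h : Relation.ReflTransGen r x y) :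
    x = y ∨ ∃ l : List α, List.Chain r x (l ++ [y]) := by
  induction h using Relation.ReflTransGen.head_induction_on with
  | refl => exact Or.inl rfl
  | head hab _ ih =>
      right
      rcases ih with rfl | ⟨l, hl⟩
      · exact ⟨[], List.isChain_pair.2 hab⟩
      · exact ⟨_ :: l, List.chain_cons.2 ⟨hab, hl⟩⟩

private lemma sum_list_decomp {V L : Type} :
    ∀ l : List (V ⊕ L), (∃ l1 : List L, l = l1.map Sum.inr) ∨
      ∃ (l1 : List L) (c : V) (l2 : List (V ⊕ L)),
        l = l1.map Sum.inr ++ Sum.inl c :: l2 := by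
  intro l
  induction l with
  | nil => exact Or.inl ⟨[], rfl⟩
  | cons a t ih =>
      cases a with
      | inl c => exact Or.inr ⟨[], c, t, rfl⟩
      | inr x =>
          rcases ih with ⟨l1, rfl⟩ | ⟨l1, c, l2, rfl⟩
          · exact Or.inl ⟨x :: l1, rfl⟩
          · exact Or.inr ⟨x :: l1, c, l2, rfl⟩

/-- Latent projection preserves directed reachability among retained vertices:
if `G'` (on observed vertices `V`) is the latent projection of a directed
graph `G` on `V ⊕ L` — i.e. `a → b` in `G'` iff there is a directed walk from
`a` to `b` in `G` whose internal vertices all lie in `L` — then for `a, b ∈ V`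
there is a directed path from `a` to `b` in `G'` iff there is one in `G`. -/
theorem latent_projection_preserves_reachability {V L : Type}
    (dir : V ⊕ L → V ⊕ L → Prop) (dir' : V → V → Prop)
    (hproj : ∀ a b : V, dir' a b ↔
      ∃ l : List L, List.Chain dir (Sum.inl a) (l.map Sum.inr ++ [Sum.inl b])) :
    ∀ a b : V, Relation.ReflTransGen dir' a b ↔
      Relation.ReflTransGen dir (Sum.inl a) (Sum.inl b) := by
  have key : ∀ (n : ℕ) (l : List (V ⊕ L)) (a b : V), l.length ≤ n →
      List.Chain dir (Sum.inl a) (l ++ [Sum.inl b]) → Relation.ReflTransGen dir' a b := by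
    intro n
    induction n with
    | zero =>
        intro l a b hlen hc
        have : l = [] := List.length_eq_zero_iff.1 (Nat.le_zero.1 hlen)
        subst this
        simp at hc
        exact Relation.ReflTransGen.single ((hproj a b).2 ⟨[], by simpa using hc⟩)
    | succ n ih =>
        intro l a b hlen hc
        rcases sum_list_decomp l with ⟨l1, rfl⟩ | ⟨l1, c, l2, rfl⟩
        · exact Relation.ReflTransGen.single ((hproj a b).2 ⟨l1, hc⟩)
        · rw [List.append_assoc, List.cons_append] at hc
          replace hc := List.isChain_cons_split.1 hc
          refine Relation.ReflTransGen.head ((hproj a c).2 ⟨l1, hc.1⟩) ?_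
          refine ih l2 c b ?_ hc.2
          have : (l1.map Sum.inr ++ Sum.inl c :: l2).length ≤ n + 1 := hlen
          simp [List.length_append] at this
          omega
  intro a b
  constructor
  · intro h
    induction h with
    | refl => exact Relation.ReflTransGen.refl
    | tail _ hbc ih =>
        rcases (hproj _ _).1 hbc with ⟨l, hl⟩
        exact ih.trans (chain_to_rtg _ _ _ hl)
  · intro h
    rcases rtg_to_chain h with heq | ⟨l, hl⟩
    · cases heq; exact Relation.ReflTransGen.refl
    · exact key l.length l a b le_rfl hl
end
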